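/- arXiv:1702.01074 — 3 statements merged into one kernel-verified Lean document; each statement's English description precedes it below -/
import Mathlib

section
/- For a in the punctured unit disk, the critical point c_- = a · (2 + |a|^2 − √((4 − |a|^2)(1 − |a|^2))) / (3|a|^2) lies in the open unit disk, i.e. |c_-| < 1, and the critical point c_+ = a · (2 + |a|^2 + √((4 − |a|^2)(1 − |a|^2))) / (3|a|^2) lies outside the closed unit disk, i.e. |c_+| > 1. -/
open Complex

theorem blaschke_critical_points_location (a : ℂ) (ha0 : 0 < ‖a‖)
    (ha1 : ‖a‖ < 1) :
    let s : ℝ := Real.sqrt ((4 - (‖a‖) ^ 2) * (1 - (‖a‖) ^ 2))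
    ‖(a * (2 + (‖a‖ : ℂ) ^ 2 - (s : ℂ)) /
        (3 * (‖a‖ : ℂ) ^ 2))‖ < 1 ∧
    ‖(a * (2 + (‖a‖ : ℂ) ^ 2 + (s : ℂ)) /
        (3 * (‖a‖ : ℂ) ^ 2))‖ > 1 := by
  intro s
  set r := ‖a‖ with hr
  have hs0 : 0 ≤ s := Real.sqrt_nonneg _
  have hsq : s ^ 2 = (4 - r ^ 2) * (1 - r ^ 2) := Real.sq_sqrt (by rw [← hr]; nlinarith [mul_pos (show (0:ℝ) < 4 - r^2 by nlinarith) (show (0:ℝ) < 1 - r^2 by nlinarith)])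
  have hslt : s < 2 + r ^ 2 := by nlinarith
  have key : ∀ x : ℝ, a * (2 + (r:ℂ)^2 + (x:ℂ)) / (3*(r:ℂ)^2)
      = a * (((2 + r^2 + x : ℝ) / (3*r^2) : ℝ) : ℂ) := by
    intro x; push_cast; field_simp
  have habs : ∀ x : ℝ, ‖(a * (((x : ℝ)) : ℂ))‖ = r * |x| := by
    intro x; rw [norm_mul, Complex.norm_real, Real.norm_eq_abs]
  constructor
  · have e : a * (2 + (r:ℂ)^2 - (s:ℂ)) / (3*(r:ℂ)^2)
        = a * (((2 + r^2 - s : ℝ) / (3*r^2) : ℝ) : ℂ) := by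
      have := key (-s); push_cast at this ⊢; linear_combination this
    rw [e, habs]
    rw [_root_.abs_of_nonneg (div_nonneg (by linarith) (by positivity))]
    rw [mul_div_assoc', div_lt_one (by positivity)]
    nlinarith [sq_nonneg (2 + r^2 - 3*r - s), sq_nonneg (1 - r), sq_nonneg r]
  · rw [key s, habs]
    rw [_root_.abs_of_nonneg (div_nonneg (by positivity) (by positivity))]
    rw [gt_iff_lt, mul_div_assoc', one_lt_div (by positivity)]
    nlinarith [mul_pos ha0 (show (0:ℝ) < 2 + r^2 + s - 3*r by nlinarith [mul_pos (show (0:ℝ) < 1 - r by linarith) (show (0:ℝ) < 2 - r by linarith)])]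
end

section
/- Let a be in the punctured unit disk and λ ∈ ℂ nonzero. If c is a nonzero complex number with |c| ≤ |a|/2 that is a critical point of B_{a,λ}, then (|λ|/(8|a|))^{1/5} ≤ |c| ≤ (8|λ|/|a|)^{1/5}. -/
open Complex

set_option maxHeartbeats 1600000 in
theorem perturbed_blaschke_critical_bounds (a lam c : ℂ) (ha0 : 0 < ‖a‖)
    (ha1 : ‖a‖ < 1) (hlam : lam ≠ 0) (hc0 : c ≠ 0)
    (hcsmall : ‖c‖ ≤ ‖a‖ / 2)
    (hcrit : deriv (fun w : ℂ => w ^ 3 * (w - a) / (1 - (starRingEnd ℂ) a * w) + lam / w ^ 2) c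
      = 0) :
    (‖lam‖ / (8 * ‖a‖)) ^ ((1 : ℝ) / 5) ≤ ‖c‖ ∧
    ‖c‖ ≤ (8 * ‖lam‖ / ‖a‖) ^ ((1 : ℝ) / 5) := by
  set b := (starRingEnd ℂ) a with hbdef
  set A := ‖a‖ with hA
  set C := ‖c‖ with hC
  have hC0 : 0 < C := norm_pos_iff.mpr hc0
  have hL0 : 0 < ‖lam‖ := norm_pos_iff.mpr hlam
  set L := ‖lam‖ with hL
  have habsb : ‖b‖ = A := Complex.norm_conj a
  have habsbc : ‖b * c‖ = A * C := by rw [norm_mul, habsb]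
  have hACle : A * C ≤ A ^ 2 / 2 := by nlinarith
  have hden : (1 : ℂ) - b * c ≠ 0 := by
    intro h
    have hbc1 : b * c = 1 := by linear_combination -h
    have : A * C = 1 := by rw [← habsbc, hbc1, norm_one]
    nlinarith
  -- derivative computation
  have h1 : HasDerivAt (fun w : ℂ => w ^ 3 * (w - a))
      ((↑3 * c ^ 2) * (c - a) + c ^ 3 * 1) c :=
    (hasDerivAt_pow 3 c).mul ((hasDerivAt_id c).sub_const a)
  have h2 : HasDerivAt (fun w : ℂ => 1 - b * w) (0 - b * 1) c :=
    (hasDerivAt_const c 1).sub ((hasDerivAt_id c).const_mul b)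
  have h3 : HasDerivAt (fun w : ℂ => w ^ 3 * (w - a) / (1 - b * w))
      ((((↑3 * c ^ 2) * (c - a) + c ^ 3 * 1) * (1 - b * c) - c ^ 3 * (c - a) * (0 - b * 1))
        / (1 - b * c) ^ 2) c := h1.div h2 hden
  have hc2 : c ^ 2 ≠ 0 := pow_ne_zero 2 hc0
  have h4 : HasDerivAt (fun w : ℂ => lam / w ^ 2) (lam * (-(↑2 * c ^ 1) / (c ^ 2) ^ 2)) c := by
    have := (((hasDerivAt_pow 2 c).inv hc2).const_mul lam)
    simpa [div_eq_mul_inv] using this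
  have h5 := (show HasDerivAt (fun w : ℂ => w ^ 3 * (w - a) / (1 - b * w) + lam / w ^ 2) _ c
    from h3.add h4).deriv
  rw [hcrit] at h5
  have hden' : (1 : ℂ) - c * b ≠ 0 := by rwa [mul_comm c b]
  field_simp at h5
  have h6 : c * (c ^ 5 * (3 * (c - a) * (1 - b * c) + c * (1 - b * a))
      - 2 * lam * (1 - b * c) ^ 2) = 0 := by linear_combination -c * h5
  have hiden : c ^ 5 * (3 * (c - a) * (1 - b * c) + c * (1 - b * a))
      = 2 * lam * (1 - b * c) ^ 2 := by
    rcases mul_eq_zero.mp h6 with h | h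
    · exact absurd h hc0
    · exact sub_eq_zero.mp h
  -- modulus of identity
  set D := ‖1 - b * c‖ with hD
  set p := ‖3 * (c - a) * (1 - b * c) + c * (1 - b * a)‖ with hp
  have hE : C ^ 5 * p = 2 * L * D ^ 2 := by
    have := congrArg norm hiden
    simpa [norm_mul, norm_pow, hC, hL, hD, hp] using this
  -- bounds on pieces
  have hD_lo : 1 - A * C ≤ D := by
    have h := norm_sub_norm_le (1 : ℂ) (b * c)
    simp only [norm_one] at h
    rw [habsbc] at h
    linarith
  have hD_hi : D ≤ 1 + A * C := by
    have h := norm_sub_le (1 : ℂ) (b * c)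
    simp only [norm_one] at h
    rw [habsbc] at h
    linarith
  set E := ‖c - a‖ with hEd
  have hca_lo : A - C ≤ E := by
    have h := norm_sub_norm_le a c
    rw [norm_sub_rev] at h
    exact h
  have hca_hi : E ≤ A + C := by
    have h := norm_sub_le c a
    linarith
  have hba : (1 : ℂ) - b * a = ((1 - A ^ 2 : ℝ) : ℂ) := by
    rw [hbdef, mul_comm, Complex.mul_conj, Complex.normSq_eq_norm_sq]
    push_cast
    ring
  have hs1 : A ^ 2 < 1 := by nlinarith
  have habs1ba : ‖(1 : ℂ) - b * a‖ = 1 - A ^ 2 := by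
    rw [hba]
    exact (Complex.norm_real _).trans (Real.norm_of_nonneg (by linarith))
  have h2' : ‖3 * (c - a) * (1 - b * c)‖ = 3 * E * D := by
    rw [norm_mul, norm_mul, ← hEd, ← hD]
    norm_num
  have h3' : ‖c * (1 - b * a)‖ = C * (1 - A ^ 2) := by
    rw [norm_mul, habs1ba, ← hC]
  have hp_hi : p ≤ 3 * E * D + C * (1 - A ^ 2) := by
    have h := norm_add_le (3 * (c - a) * (1 - b * c)) (c * (1 - b * a))
    rw [h2', h3'] at h
    exact h
  have hp_lo : 3 * E * D - C * (1 - A ^ 2) ≤ p := by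
    have h := norm_add_le (3 * (c - a) * (1 - b * c) + c * (1 - b * a))
      (-(c * (1 - b * a)))
    rw [add_neg_cancel_right, norm_neg, h2', h3', ← hp] at h
    linarith
  -- real arithmetic
  clear_value A C L D p E
  clear hcrit h1 h2 h3 h4 h5 h6 hiden hden hc2 hba habs1ba h2' h3' hp hD hEd hA hC hL habsb habsbc
  have hDpos : (0 : ℝ) < D := by nlinarith
  have hEpos : A / 2 ≤ E := by linarith
  have hD_lo2 : 1 - A ^ 2 / 2 ≤ D := by linarith
  have hD_hi2 : D ≤ 1 + A ^ 2 / 2 := by linarith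
  have hc5 : (0 : ℝ) < C ^ 5 := pow_pos hC0 5
  have hq : (0 : ℝ) < (1 + A ^ 2 / 2) ^ 2 := by positivity
  -- lower bound on p
  have h3ED : 3 * (A / 2) * (1 - A ^ 2 / 2) ≤ 3 * E * D := by
    nlinarith [mul_nonneg (by linarith : (0:ℝ) ≤ E - A / 2) (by linarith : (0:ℝ) ≤ D),
      mul_nonneg (by linarith : (0:ℝ) ≤ A / 2) (by linarith : (0:ℝ) ≤ D - (1 - A ^ 2 / 2))]
  have hplo2 : A * (4 - A ^ 2) / 4 ≤ p := by
    nlinarith [mul_nonneg (by linarith : (0:ℝ) ≤ A / 2 - C) (by linarith : (0:ℝ) ≤ 1 - A ^ 2)]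
  -- key2 : A * C^5 ≤ 8 L
  have key2 : A * C ^ 5 ≤ 8 * L := by
    have step1 : C ^ 5 * (A * (4 - A ^ 2) / 4) ≤ 2 * L * D ^ 2 := by
      rw [← hE]
      exact mul_le_mul_of_nonneg_left hplo2 hc5.le
    have hD2 : D ^ 2 ≤ (1 + A ^ 2 / 2) ^ 2 := by nlinarith
    have step2 : 2 * L * D ^ 2 ≤ 2 * L * (1 + A ^ 2 / 2) ^ 2 :=
      mul_le_mul_of_nonneg_left hD2 (by positivity)
    have hq2 : (1 + A ^ 2 / 2) ^ 2 ≤ 4 - A ^ 2 := by nlinarith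
    have step3 : A * C ^ 5 * (1 + A ^ 2 / 2) ^ 2 ≤ A * C ^ 5 * (4 - A ^ 2) :=
      mul_le_mul_of_nonneg_left hq2 (by positivity)
    have hfin : (A * C ^ 5) * (1 + A ^ 2 / 2) ^ 2 ≤ (8 * L) * (1 + A ^ 2 / 2) ^ 2 := by
      nlinarith
    exact le_of_mul_le_mul_right hfin hq
  -- upper bound on p
  have hphi2 : p ≤ A * ((9 / 2) * D + (1 - A ^ 2) / 2) := by
    nlinarith [mul_nonneg (by linarith : (0:ℝ) ≤ A + C - E) (by linarith : (0:ℝ) ≤ D),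
      mul_nonneg (by linarith : (0:ℝ) ≤ 3 * A / 2 - (A + C)) (by linarith : (0:ℝ) ≤ D),
      mul_nonneg (by linarith : (0:ℝ) ≤ A / 2 - C) (by linarith : (0:ℝ) ≤ 1 - A ^ 2)]
  have hquad : (9 / 2) * D + (1 - A ^ 2) / 2 ≤ 16 * D ^ 2 := by
    nlinarith [mul_nonneg (by linarith : (0:ℝ) ≤ D - (1 - A ^ 2 / 2))
      (by linarith : (0:ℝ) ≤ D - (1 - A ^ 2 / 2)), sq_nonneg A,
      mul_nonneg (by linarith : (0:ℝ) ≤ D - (1 - A ^ 2 / 2)) (sq_nonneg A)]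
  have key1 : L ≤ 8 * (A * C ^ 5) := by
    have h1' : p ≤ A * (16 * D ^ 2) := by
      calc p ≤ A * ((9 / 2) * D + (1 - A ^ 2) / 2) := hphi2
        _ ≤ A * (16 * D ^ 2) := mul_le_mul_of_nonneg_left hquad ha0.le
    have step1 : 2 * L * D ^ 2 ≤ C ^ 5 * (A * (16 * D ^ 2)) := by
      rw [← hE]
      exact mul_le_mul_of_nonneg_left h1' hc5.le
    have hfin : L * D ^ 2 ≤ (8 * (A * C ^ 5)) * D ^ 2 := by nlinarith
    exact le_of_mul_le_mul_right hfin (by positivity)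
  -- conclude via rpow
  have hfinal1 : L / (8 * A) ≤ C ^ 5 := by
    rw [div_le_iff₀ (by positivity)]
    nlinarith
  have hfinal2 : C ^ 5 ≤ 8 * L / A := by
    rw [le_div_iff₀ ha0]
    nlinarith
  have hCpow : ((C ^ 5 : ℝ)) ^ ((1:ℝ)/5) = C := by
    rw [← Real.rpow_natCast C 5, ← Real.rpow_mul hC0.le]
    norm_num
  constructor
  · calc (L / (8 * A)) ^ ((1:ℝ)/5) ≤ (C ^ 5) ^ ((1:ℝ)/5) :=
        Real.rpow_le_rpow (by positivity) hfinal1 (by norm_num)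
      _ = C := hCpow
  · calc C = (C ^ 5) ^ ((1:ℝ)/5) := hCpow.symm
      _ ≤ (8 * L / A) ^ ((1:ℝ)/5) :=
        Real.rpow_le_rpow (by positivity) hfinal2 (by norm_num)
end

section
/- Let a be in the punctured unit disk. There exists ε > 0 such that for all λ ∈ ℂ with 0 < |λ| < ε and all z with |z| < (|λ|/3)^{1/2}, z ≠ 0, one has |B_{a,λ}(z)| > 2; moreover √(|λ|/3) < |a|/2 for such λ, so this region is disjoint from the annulus containing the five small zeros. -/
open Complex

theorem perturbed_blaschke_escape_region (a : ℂ) (ha0 : 0 < ‖a‖)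
    (ha1 : ‖a‖ < 1) :
    ∃ ε : ℝ, 0 < ε ∧ ∀ lam : ℂ, 0 < ‖lam‖ → ‖lam‖ < ε →
      (∀ z : ℂ, z ≠ 0 → ‖z‖ < Real.sqrt (‖lam‖ / 3) →
        2 < ‖z ^ 3 * (z - a) / (1 - (starRingEnd ℂ) a * z) + lam / z ^ 2‖) ∧
      Real.sqrt (‖lam‖ / 3) < ‖a‖ / 2 := by
  refine ⟨3 * ‖a‖ ^ 2 / 4, by positivity, fun lam hl0 hle => ?_⟩
  have hsq : Real.sqrt (‖lam‖ / 3) < ‖a‖ / 2 := by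
    rw [show ‖a‖ / 2 = Real.sqrt ((‖a‖ / 2) ^ 2) from
      (Real.sqrt_sq (by positivity)).symm]
    apply Real.sqrt_lt_sqrt (by positivity)
    nlinarith
  refine ⟨fun z hz hzlt => ?_, hsq⟩
  have hz0 : (0:ℝ) ≤ ‖z‖ := (norm_nonneg z)
  have hza : ‖z‖ < 1/2 := by
    have := hzlt.trans hsq
    linarith
  have hz2 : ‖z‖ ^ 2 < ‖lam‖ / 3 := by
    rwa [← Real.lt_sqrt hz0]
  have hzabs0 : (0:ℝ) < ‖z‖ := norm_pos_iff.mpr hz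
  -- denominator bound
  have hden : (1:ℝ)/2 < ‖1 - (starRingEnd ℂ) a * z‖ := by
    have h1 : ‖(starRingEnd ℂ) a * z‖ < 1/2 := by
      rw [norm_mul, Complex.norm_conj]
      nlinarith
    have h2 : ‖(1:ℂ)‖ - ‖(starRingEnd ℂ) a * z‖
        ≤ ‖1 - (starRingEnd ℂ) a * z‖ := by
      simpa using
        norm_sub_norm_le (1:ℂ) ((starRingEnd ℂ) a * z)
    simp only [norm_one] at h2
    linarith
  have hnum : ‖z - a‖ < 3/2 := by
    have := norm_sub_le z a
    linarith
  have hB : ‖z ^ 3 * (z - a) / (1 - (starRingEnd ℂ) a * z)‖ < 3/8 := by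
    rw [norm_div, norm_mul, norm_pow]
    rw [div_lt_iff₀ (by linarith)]
    have h3 : ‖z‖ ^ 3 * ‖z - a‖ < 3/16 := by
      have h4 : ‖z‖ ^ 3 < (1/2)^3 := by nlinarith
      nlinarith [norm_nonneg (z - a), pow_nonneg hz0 3]
    nlinarith
  have hL : (3:ℝ) < ‖lam / z ^ 2‖ := by
    rw [norm_div, norm_pow]
    rw [lt_div_iff₀ (by positivity)]
    nlinarith
  have htri : ‖lam / z ^ 2‖ ≤
      ‖z ^ 3 * (z - a) / (1 - (starRingEnd ℂ) a * z) + lam / z ^ 2‖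
      + ‖z ^ 3 * (z - a) / (1 - (starRingEnd ℂ) a * z)‖ := by
    have := norm_sub_le ((z ^ 3 * (z - a) / (1 - (starRingEnd ℂ) a * z) + lam / z ^ 2))
      (z ^ 3 * (z - a) / (1 - (starRingEnd ℂ) a * z))
    simp only [add_sub_cancel_left] at this
    linarith
  linarith
end
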